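/- For every nonzero p ∈ ℂ, the free ℂ-module with basis {L_{i,m} : i ∈ ℤ≥0, m ∈ ℤ, m ≥ −1}, equipped with the ℂ-bilinear bracket determined on basis vectors by [L_{i,m}, L_{j,n}] = ((j+p)(m+1) − (i+p)(n+1))·L_{i+j,m+n} (where L_{i+j,m+n} is read as 0 when m+n < −1; the scalar coefficient vanishes in every such case), is a Lie algebra over ℂ: the bracket is alternating and satisfies the Jacobi identity. -/

import Mathlib

namespace Stmt0

/-- Index set for the basis `{L_{i,m} : i ∈ ℕ, m ∈ ℤ, m ≥ -1}`. -/
def LIdx : Type := {q : ℕ × ℤ // -1 ≤ q.2}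

/-- Structure constants: `[L_{i,m}, L_{j,n}] = ((j+p)(m+1) − (i+p)(n+1))·L_{i+j,m+n}`,
where `L_{i+j,m+n}` is read as `0` when `m+n < −1`. -/
noncomputable def str (p : ℂ) (a b : LIdx) : LIdx →₀ ℂ :=
  if h : -1 ≤ a.1.2 + b.1.2 then
    Finsupp.single ⟨(a.1.1 + b.1.1, a.1.2 + b.1.2), h⟩
      (((b.1.1 : ℂ) + p) * ((a.1.2 : ℂ) + 1) - ((a.1.1 : ℂ) + p) * ((b.1.2 : ℂ) + 1))
  else 0

/-- The ℂ-bilinear extension of the structure constants to the free ℂ-module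
`LIdx →₀ ℂ` with basis `LIdx`. -/
noncomputable def br (p : ℂ) (x y : LIdx →₀ ℂ) : LIdx →₀ ℂ :=
  x.sum fun a ca => y.sum fun b cb => (ca * cb) • str p a b

/-! ### Auxiliary lemmas -/

/-- The scalar structure coefficient, as a total function. -/
noncomputable def coef (p : ℂ) (a b : LIdx) : ℂ :=
  ((b.1.1 : ℂ) + p) * ((a.1.2 : ℂ) + 1) - ((a.1.1 : ℂ) + p) * ((b.1.2 : ℂ) + 1)

/-- The inclusion of the index set into `ℕ × ℤ`. -/
def ι : LIdx → ℕ × ℤ := Subtype.val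

lemma ι_inj : Function.Injective ι := Subtype.val_injective

lemma map_str (p : ℂ) (a b : LIdx) :
    Finsupp.mapDomain ι (str p a b) =
      Finsupp.single (a.1.1 + b.1.1, a.1.2 + b.1.2) (coef p a b) := by
  unfold str coef
  split_ifs with h
  · erw [Finsupp.mapDomain_single]; rfl
  · have h1 : a.1.2 = -1 := by have := a.2; have := b.2; omega
    have h2 : b.1.2 = -1 := by have := a.2; have := b.2; omega
    rw [Finsupp.mapDomain_zero, h1, h2]
    push_cast
    simp

lemma br_zero_left (p : ℂ) (y : LIdx →₀ ℂ) : br p 0 y = 0 := by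
  simp [br]

lemma br_zero_right (p : ℂ) (x : LIdx →₀ ℂ) : br p x 0 = 0 := by
  simp [br]

lemma br_add_left (p : ℂ) (x x' y : LIdx →₀ ℂ) :
    br p (x + x') y = br p x y + br p x' y := by
  unfold br
  rw [Finsupp.sum_add_index']
  · intro a; simp
  · intro a c1 c2; simp [add_mul, add_smul, Finsupp.sum_add]

lemma br_add_right (p : ℂ) (x y y' : LIdx →₀ ℂ) :
    br p x (y + y') = br p x y + br p x y' := by
  unfold br
  rw [← Finsupp.sum_add]
  apply Finsupp.sum_congr
  intro a _
  rw [Finsupp.sum_add_index']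
  · intro b; simp
  · intro b c1 c2; simp [mul_add, smul_add, add_smul]

lemma br_smul_left (p : ℂ) (c : ℂ) (x y : LIdx →₀ ℂ) :
    br p (c • x) y = c • br p x y := by
  unfold br
  rw [Finsupp.sum_smul_index', Finsupp.smul_sum]
  · apply Finsupp.sum_congr
    intro a _
    rw [Finsupp.smul_sum]
    apply Finsupp.sum_congr
    intro b _
    rw [smul_smul]
    congr 1
    simp only [smul_eq_mul]
    ring
  · intro a; simp

lemma br_smul_right (p : ℂ) (c : ℂ) (x y : LIdx →₀ ℂ) :
    br p x (c • y) = c • br p x y := by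
  unfold br
  rw [Finsupp.smul_sum]
  apply Finsupp.sum_congr
  intro a _
  rw [Finsupp.sum_smul_index', Finsupp.smul_sum]
  · apply Finsupp.sum_congr
    intro b _
    rw [smul_smul]
    congr 1
    simp only [smul_eq_mul]
    ring
  · intro b; simp

lemma br_single_single (p : ℂ) (a b : LIdx) (ca cb : ℂ) :
    br p (Finsupp.single a ca) (Finsupp.single b cb) = (ca * cb) • str p a b := by
  unfold br
  rw [Finsupp.sum_single_index, Finsupp.sum_single_index]
  · simp
  · simp [Finsupp.sum]

lemma str_antisymm (p : ℂ) (a b : LIdx) : str p b a = - str p a b := by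
  obtain ⟨⟨i, m⟩, hm⟩ := a
  obtain ⟨⟨j, n⟩, hn⟩ := b
  unfold str
  by_cases h : -1 ≤ m + n
  · have h' : -1 ≤ n + m := by omega
    erw [dif_pos h, dif_pos h', ← Finsupp.single_neg]
    have e : (⟨(j + i, n + m), h'⟩ : LIdx) = ⟨(i + j, m + n), h⟩ := by
      apply Subtype.ext
      rw [Prod.mk.injEq]
      constructor <;> omega
    rw [e]
    congr 1
    ring
  · rw [dif_neg h, dif_neg (by omega : ¬ (-1 : ℤ) ≤ n + m), neg_zero]

lemma br_antisymm (p : ℂ) (x y : LIdx →₀ ℂ) : br p y x = - br p x y := by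
  unfold br
  rw [Finsupp.sum_comm]
  unfold Finsupp.sum
  rw [← Finset.sum_neg_distrib]
  refine Finset.sum_congr rfl fun a _ => ?_
  rw [← Finset.sum_neg_distrib]
  refine Finset.sum_congr rfl fun b _ => ?_
  beta_reduce
  rw [str_antisymm p a b, smul_neg, mul_comm (y b) (x a)]

lemma jacobi_single (p : ℂ) (a b c : LIdx) :
    br p (Finsupp.single a 1) (br p (Finsupp.single b 1) (Finsupp.single c 1)) =
      br p (br p (Finsupp.single a 1) (Finsupp.single b 1)) (Finsupp.single c 1)
        + br p (Finsupp.single b 1) (br p (Finsupp.single a 1) (Finsupp.single c 1)) := by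
  rw [br_single_single, br_single_single, br_single_single]
  simp only [one_mul, one_smul]
  obtain ⟨⟨i, m⟩, hm⟩ := a
  obtain ⟨⟨j, n⟩, hn⟩ := b
  obtain ⟨⟨k, l⟩, hl⟩ := c
  have bss : ∀ (a b : {q : ℕ × ℤ // -1 ≤ q.2}) (ca cb : ℂ),
      br p (Finsupp.single a ca) (Finsupp.single b cb) = (ca * cb) • str p a b :=
    fun a b ca cb => br_single_single p a b ca cb
  have ms : ∀ (a b : {q : ℕ × ℤ // -1 ≤ q.2}), Finsupp.mapDomain ι (str p a b) =
      Finsupp.single (a.1.1 + b.1.1, a.1.2 + b.1.2) (coef p a b) :=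
    fun a b => map_str p a b
  refine Finsupp.mapDomain_injective ι_inj ?_
  unfold str
  by_cases h1 : -1 ≤ n + l <;> by_cases h3 : -1 ≤ m + n <;> by_cases h5 : -1 ≤ m + l
  all_goals simp only [h1, h3, h5, dite_true, dite_false, br_zero_left, br_zero_right,
    br_single_single, bss, one_mul, mul_one, Finsupp.mapDomain_add, Finsupp.mapDomain_smul,
    Finsupp.mapDomain_zero, map_str, ms, coef, Finsupp.smul_single, smul_eq_mul, smul_zero,
    add_zero, zero_add]
  · -- all three conditions hold
    have e1 : ((i + j + k : ℕ), (m + n + l : ℤ)) = (i + (j + k), m + (n + l)) := by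
      rw [Prod.mk.injEq]; constructor <;> omega
    have e2 : ((j + (i + k) : ℕ), (n + (m + l) : ℤ)) = (i + (j + k), m + (n + l)) := by
      rw [Prod.mk.injEq]; constructor <;> omega
    rw [e1, e2, ← Finsupp.single_add]
    congr 1
    push_cast
    ring
  · -- m = l = -1
    have hm1 : m = -1 := by omega
    have hl1 : l = -1 := by omega
    have e1 : ((i + j + k : ℕ), (m + n + l : ℤ)) = (i + (j + k), m + (n + l)) := by
      rw [Prod.mk.injEq]; constructor <;> omega
    rw [e1]
    congr 1
    rw [hm1, hl1]
    push_cast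
    ring
  · -- m = n = -1
    have hm1 : m = -1 := by omega
    have hn1 : n = -1 := by omega
    have e2 : ((j + (i + k) : ℕ), (n + (m + l) : ℤ)) = (i + (j + k), m + (n + l)) := by
      rw [Prod.mk.injEq]; constructor <;> omega
    rw [e2]
    congr 1
    rw [hm1, hn1]
    push_cast
    ring
  · exact absurd (by omega : (-1 : ℤ) ≤ m + n) h3
  · -- n = l = -1
    have hn1 : n = -1 := by omega
    have hl1 : l = -1 := by omega
    have e1 : ((i + j + k : ℕ), (m + n + l : ℤ)) = (j + (i + k), n + (m + l)) := by
      rw [Prod.mk.injEq]; constructor <;> omega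
    rw [e1, ← Finsupp.single_add]
    symm
    rw [Finsupp.single_eq_zero]
    rw [hn1, hl1]
    push_cast
    ring
  · exact absurd (by omega : (-1 : ℤ) ≤ m + l) h5
  · exact absurd (by omega : (-1 : ℤ) ≤ n + l) h1

lemma jacobi_single' (p : ℂ) (a b c : LIdx) (ca cb cc : ℂ) :
    br p (Finsupp.single a ca) (br p (Finsupp.single b cb) (Finsupp.single c cc)) =
      br p (br p (Finsupp.single a ca) (Finsupp.single b cb)) (Finsupp.single c cc)
        + br p (Finsupp.single b cb) (br p (Finsupp.single a ca) (Finsupp.single c cc)) := by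
  have ea : Finsupp.single a ca = ca • Finsupp.single a (1 : ℂ) := by
    rw [Finsupp.smul_single', mul_one]
  have eb : Finsupp.single b cb = cb • Finsupp.single b (1 : ℂ) := by
    rw [Finsupp.smul_single', mul_one]
  have ec : Finsupp.single c cc = cc • Finsupp.single c (1 : ℂ) := by
    rw [Finsupp.smul_single', mul_one]
  rw [ea, eb, ec]
  simp only [br_smul_left, br_smul_right, smul_smul]
  rw [jacobi_single p a b c]
  module

/-- For every nonzero `p ∈ ℂ`, the bracket `br p` on the free ℂ-module with basis
`{L_{i,m} : i ∈ ℕ, m ∈ ℤ, m ≥ −1}` determined by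
`[L_{i,m}, L_{j,n}] = ((j+p)(m+1) − (i+p)(n+1))·L_{i+j,m+n}` is alternating and
satisfies the Jacobi identity, i.e. it makes this module a Lie algebra over ℂ. -/
theorem lie_algebra_structure (p : ℂ) (hp : p ≠ 0) :
    (∀ x : LIdx →₀ ℂ, br p x x = 0) ∧
    (∀ x y z : LIdx →₀ ℂ,
      br p x (br p y z) = br p (br p x y) z + br p y (br p x z)) := by
  constructor
  · intro x
    have h := br_antisymm p x x
    have h2 : (2 : ℂ) • br p x x = 0 := by
      rw [two_smul]
      nth_rewrite 1 [h]
      rw [neg_add_cancel]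
    rcases smul_eq_zero.mp h2 with h' | h'
    · exact absurd h' (by norm_num)
    · exact h'
  · intro x y z
    induction x using Finsupp.induction_linear with
    | zero => simp [br_zero_left, br_zero_right]
    | add f g hf hg =>
        simp only [br_add_left, br_add_right]
        rw [hf, hg]
        abel
    | single a ca =>
        induction y using Finsupp.induction_linear with
        | zero => simp [br_zero_left, br_zero_right]
        | add f g hf hg =>
            simp only [br_add_left, br_add_right]
            rw [hf, hg]
            abel
        | single b cb =>
            induction z using Finsupp.induction_linear with
            | zero => simp [br_zero_left, br_zero_right]
            | add f g hf hg =>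
                simp only [br_add_left, br_add_right]
                rw [hf, hg]
                abel
            | single c cc => exact jacobi_single' p a b c ca cb cc

end Stmt0
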